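/- Fix positive integers a and b. Let Ω = Ω(t) = 1 + Σ_{n≥1} Ω_n t^n be a formal power series in t with coefficients in ℚ[x] (or any commutative ℚ-algebra containing x) satisfying Ω' = x·Ω^{b+1} + a·t·Ω^b·Ω', where the prime denotes the formal derivative with respect to t. Then for every n ≥ 1, Ω_n = (x/n!) · ∏_{i=1}^{n−1} (a·i + b·x·(n−i) + x). -/

import Mathlib

open PowerSeries

/-- **Seo's lemma.**  Fix positive integers `a` and `b`.  If
`Ω = 1 + Σ_{n≥1} Ω_n tⁿ` is a formal power series in `t` with coefficients in
`ℚ[x]` satisfying `Ω' = x Ω^{b+1} + a t Ω^b Ω'`, then for every `n ≥ 1`,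
`Ω_n = (x/n!) ∏_{i=1}^{n-1} (a i + b x (n-i) + x)`. -/
theorem seo_lemma (a b : ℕ) (ha : 1 ≤ a) (hb : 1 ≤ b)
    (Ω : PowerSeries (Polynomial ℚ))
    (h0 : constantCoeff Ω = 1)
    (hde : d⁄dX (Polynomial ℚ) Ω =
      C Polynomial.X * Ω ^ (b + 1) +
        (a : PowerSeries (Polynomial ℚ)) * X * Ω ^ b * d⁄dX (Polynomial ℚ) Ω) :
    ∀ n : ℕ, 1 ≤ n →
      coeff n Ω =
        Polynomial.C ((n.factorial : ℚ)⁻¹) * Polynomial.X *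
          ∏ i ∈ Finset.Icc 1 (n - 1),
            (Polynomial.C ((a : ℚ) * (i : ℚ)) +
              Polynomial.C ((b : ℚ) * ((n : ℚ) - (i : ℚ))) * Polynomial.X +
              Polynomial.X) := by
  classical
  -- Leibniz rule for the formal derivative
  have hmul : ∀ f g : (Polynomial ℚ)⟦X⟧, d⁄dX (Polynomial ℚ) (f*g) =
      f * d⁄dX (Polynomial ℚ) g + g * d⁄dX (Polynomial ℚ) f := by
    intro f g; simpa [smul_eq_mul] using derivativeFun_mul f g
  -- derivative of a power of Ω
  have hpow : ∀ j : ℕ, d⁄dX (Polynomial ℚ) (Ω ^ (j+1)) =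
      ((j+1 : ℕ) : PowerSeries (Polynomial ℚ)) * (Ω ^ j * d⁄dX (Polynomial ℚ) Ω) := by
    intro j
    induction j with
    | zero => simp
    | succ j ih =>
      have h : Ω ^ (j+1+1) = Ω ^ (j+1) * Ω := by ring
      rw [h, hmul, ih]
      push_cast
      ring
  -- each power of Ω satisfies an analogous differential equation:
  -- (k+b+1) (Ω^{k+1})' = (k+1)(k+b+1) x Ω^{k+b+1} + (k+1) a t (Ω^{k+b+1})'
  have hA : ∀ k : ℕ,
      ((k+b+1 : ℕ) : PowerSeries (Polynomial ℚ)) * d⁄dX (Polynomial ℚ) (Ω ^ (k+1)) =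
        (((k+1)*(k+b+1) : ℕ) : PowerSeries (Polynomial ℚ)) *
            (C Polynomial.X * Ω ^ (k+b+1)) +
          (((k+1)*a : ℕ) : PowerSeries (Polynomial ℚ)) *
            (X * d⁄dX (Polynomial ℚ) (Ω ^ (k+b+1))) := by
    intro k
    conv_lhs => rw [hpow k, hde]
    conv_rhs => rw [hpow (k+b)]
    push_cast
    ring
  -- the resulting coefficient recurrence (no convolutions!)
  have hR : ∀ m k : ℕ,
      ((k+b+1 : ℕ) : Polynomial ℚ) * ((m+1 : ℕ) : Polynomial ℚ) *
          coeff (m+1) (Ω ^ (k+1)) =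
        (((k+1)*(k+b+1) : ℕ) : Polynomial ℚ) *
            (Polynomial.X * coeff m (Ω ^ (k+b+1))) +
          (((k+1)*a*m : ℕ) : Polynomial ℚ) * coeff m (Ω ^ (k+b+1)) := by
    intro m k
    have h := congrArg (coeff m) (hA k)
    rw [← map_natCast C (k+b+1), ← map_natCast C ((k+1)*(k+b+1)),
      ← map_natCast C ((k+1)*a)] at h
    simp only [map_add, coeff_C_mul, coeff_derivative] at h
    rcases m with _ | j
    · simp only [coeff_zero_eq_constantCoeff, map_mul, constantCoeff_X, zero_mul, mul_zero] at h ⊢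
      push_cast at h ⊢
      linear_combination h
    · rw [coeff_succ_X_mul, coeff_derivative] at h
      push_cast at h ⊢
      linear_combination h
  -- the key induction: closed formula for the coefficients of all powers of Ω
  have key : ∀ m k : ℕ,
      (((m+1).factorial : ℕ) : Polynomial ℚ) * coeff (m+1) (Ω ^ (k+1)) =
        ((k : Polynomial ℚ) + 1) * Polynomial.X *
          ∏ i ∈ Finset.Icc 1 m,
            ((a : Polynomial ℚ) * (i : Polynomial ℚ) +
              (b : Polynomial ℚ) * ((m : Polynomial ℚ) + 1 - (i : Polynomial ℚ)) * Polynomial.X +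
              ((k : Polynomial ℚ) + 1) * Polynomial.X) := by
    intro m
    induction m with
    | zero =>
      intro k
      have hkb : ((k+b+1 : ℕ) : Polynomial ℚ) ≠ 0 := Nat.cast_ne_zero.mpr (by omega)
      have h1 := hR 0 k
      have hc : coeff 0 (Ω ^ (k+b+1)) = 1 := by
        rw [coeff_zero_eq_constantCoeff, map_pow, h0, one_pow]
      rw [Finset.Icc_eq_empty (by norm_num), Finset.prod_empty]
      apply mul_left_cancel₀ hkb
      push_cast [Nat.factorial_one] at h1 ⊢
      linear_combination h1 +
        (((k : Polynomial ℚ)+1)*((k : Polynomial ℚ)+(b : Polynomial ℚ)+1)*Polynomial.X) * hc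
    | succ m ih =>
      intro k
      have hkb : ((k+b+1 : ℕ) : Polynomial ℚ) ≠ 0 := Nat.cast_ne_zero.mpr (by omega)
      have h1 := hR (m+1) k
      have h2 := ih (k+b)
      have hQ : (∏ i ∈ Finset.Icc 1 (m+1),
              ((a : Polynomial ℚ) * (i : Polynomial ℚ) +
                (b : Polynomial ℚ) * (((m+1 : ℕ) : Polynomial ℚ) + 1 - (i : Polynomial ℚ)) *
                  Polynomial.X +
                ((k : Polynomial ℚ) + 1) * Polynomial.X)) =
          (∏ i ∈ Finset.Icc 1 m,
              ((a : Polynomial ℚ) * (i : Polynomial ℚ) +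
                (b : Polynomial ℚ) * ((m : Polynomial ℚ) + 1 - (i : Polynomial ℚ)) * Polynomial.X +
                (((k+b : ℕ) : Polynomial ℚ) + 1) * Polynomial.X)) *
            ((a : Polynomial ℚ) * ((m : Polynomial ℚ) + 1) + (b : Polynomial ℚ) * Polynomial.X +
              ((k : Polynomial ℚ) + 1) * Polynomial.X) := by
        rw [Finset.prod_Icc_succ_top (Nat.le_add_left 1 m)]
        refine congrArg₂ (· * ·) ?_ ?_
        · refine Finset.prod_congr rfl fun i hi => by push_cast; ring
        · push_cast; ring
      apply mul_left_cancel₀ hkb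
      rw [hQ]
      push_cast [Nat.factorial_succ] at h1 h2 ⊢
      linear_combination ((Nat.factorial m : Polynomial ℚ) * ((m : Polynomial ℚ)+1)) * h1 +
        (((k : Polynomial ℚ)+1)*((k : Polynomial ℚ)+(b : Polynomial ℚ)+1)*Polynomial.X +
          ((k : Polynomial ℚ)+1)*(a : Polynomial ℚ)*((m : Polynomial ℚ)+1)) * h2
  -- conclusion: take k = 0
  intro n hn
  obtain ⟨m, rfl⟩ : ∃ m, n = m + 1 := ⟨n - 1, by omega⟩
  have h := key m 0
  rw [pow_one] at h
  have hfac : (((m+1).factorial : ℕ) : Polynomial ℚ) ≠ 0 :=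
    Nat.cast_ne_zero.mpr (Nat.factorial_ne_zero _)
  have hone : (((m+1).factorial : ℕ) : Polynomial ℚ) *
      Polynomial.C (((m+1).factorial : ℚ)⁻¹) = 1 := by
    rw [← Polynomial.C_eq_natCast, ← Polynomial.C_mul,
      mul_inv_cancel₀ (by exact_mod_cast Nat.factorial_ne_zero (m+1)), Polynomial.C_1]
  apply mul_left_cancel₀ hfac
  rw [h]
  simp only [Nat.add_sub_cancel]
  have hprod : (∏ i ∈ Finset.Icc 1 m,
        (Polynomial.C ((a : ℚ) * (i : ℚ)) +
          Polynomial.C ((b : ℚ) * (((m+1 : ℕ) : ℚ) - (i : ℚ))) * Polynomial.X +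
          Polynomial.X)) =
      ∏ i ∈ Finset.Icc 1 m,
        ((a : Polynomial ℚ) * (i : Polynomial ℚ) +
          (b : Polynomial ℚ) * ((m : Polynomial ℚ) + 1 - (i : Polynomial ℚ)) * Polynomial.X +
          ((0 : Polynomial ℚ) + 1) * Polynomial.X) := by
    refine Finset.prod_congr rfl fun i hi => ?_
    simp only [map_mul, map_sub, map_natCast]
    push_cast
    ring
  rw [hprod]
  push_cast
  linear_combination -(Polynomial.X *
    ∏ i ∈ Finset.Icc 1 m,
        ((a : Polynomial ℚ) * (i : Polynomial ℚ) +
          (b : Polynomial ℚ) * ((m : Polynomial ℚ) + 1 - (i : Polynomial ℚ)) * Polynomial.X +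
          ((0 : Polynomial ℚ) + 1) * Polynomial.X)) * hone
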